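/- For each ε ∈ (0,1), let I_ε be an interval and g_ε, h_ε, θ_ε : I_ε → ℝ be integrable functions satisfying: |h_ε(s)| ≤ A·ε for all s; ∫_{I_ε} |g_ε(s)| ds ≤ B·ε^{3/2}; ∫_{I_ε} |θ_ε(s)| ds ≤ C·√ε; and |h_ε(s)| ≤ |g_ε(s)| whenever |θ_ε(s)| ≤ π/4. Then ∫_{I_ε} |h_ε(s)| ds ≤ (B + 4AC/π)·ε^{3/2}. -/

import Mathlib

open MeasureTheory

theorem stmt_3 (ε A B C : ℝ) (hε : 0 < ε) (hε1 : ε < 1)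
    (hA : 0 < A) (hB : 0 < B) (hC : 0 < C)
    (I : Set ℝ) (hI : I.OrdConnected) (hIm : MeasurableSet I)
    (g h θ : ℝ → ℝ)
    (hg : IntegrableOn g I) (hh : IntegrableOn h I) (hθ : IntegrableOn θ I)
    (hhb : ∀ s ∈ I, |h s| ≤ A * ε)
    (hgb : ∫ s in I, |g s| ≤ B * ε ^ ((3:ℝ)/2))
    (hθb : ∫ s in I, |θ s| ≤ C * Real.sqrt ε)
    (hcomp : ∀ s ∈ I, |θ s| ≤ Real.pi / 4 → |h s| ≤ |g s|) :
    ∫ s in I, |h s| ≤ (B + 4 * A * C / Real.pi) * ε ^ ((3:ℝ)/2) := by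
  set μ := (volume : Measure ℝ) with hμdef
  have hθm := hθ.aestronglyMeasurable
  set θ' := hθm.mk θ with hθ'def
  have hmk : θ =ᵐ[μ.restrict I] θ' := hθm.ae_eq_mk
  have hθ'meas : StronglyMeasurable θ' := hθm.stronglyMeasurable_mk
  have hSet : MeasurableSet {s : ℝ | |θ' s| ≤ Real.pi / 4} :=
    measurableSet_le hθ'meas.measurable.abs measurable_const
  set S := I ∩ {s | |θ' s| ≤ Real.pi / 4} with hSdef
  set T := I ∩ {s | |θ' s| ≤ Real.pi / 4}ᶜ with hTdef
  have hSm : MeasurableSet S := hIm.inter hSet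
  have hTm : MeasurableSet T := hIm.inter hSet.compl
  have hST : S ∪ T = I := by
    rw [hSdef, hTdef, ← Set.inter_union_distrib_left, Set.union_compl_self, Set.inter_univ]
  have hdisj : Disjoint S T := by
    apply Set.disjoint_left.2
    rintro x ⟨-, hx1⟩ ⟨-, hx2⟩
    exact hx2 hx1
  have hSsub : S ⊆ I := Set.inter_subset_left
  have hTsub : T ⊆ I := Set.inter_subset_left
  have hθ'int : IntegrableOn θ' I := hθ.congr hmk
  have hθ'abs : IntegrableOn (fun s => |θ' s|) I μ := hθ'int.abs
  have hhabs : IntegrableOn (fun s => |h s|) I μ := hh.abs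
  have hgabs : IntegrableOn (fun s => |g s|) I μ := hg.abs
  -- finiteness of μ T
  have hfin : μ T < ⊤ := by
    have h1 : T ⊆ {x | Real.pi / 4 ≤ ‖θ' x‖} ∩ I := by
      rintro x ⟨hxI, hx⟩
      simp only [Set.mem_compl_iff, Set.mem_setOf_eq, not_le] at hx
      exact ⟨le_of_lt hx, hxI⟩
    calc μ T ≤ μ ({x | Real.pi / 4 ≤ ‖θ' x‖} ∩ I) := measure_mono h1
      _ = (μ.restrict I) {x | Real.pi / 4 ≤ ‖θ' x‖} := by
          rw [Measure.restrict_apply (measurableSet_le measurable_const hθ'meas.measurable.norm)]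
      _ < ⊤ := hθ'int.measure_norm_ge_lt_top (by positivity)
  -- Chebyshev bound on μ T
  have hcheb : Real.pi / 4 * (μ T).toReal ≤ C * Real.sqrt ε := by
    have e1 : ∫ s in T, (Real.pi / 4 : ℝ) ≤ ∫ s in T, |θ' s| := by
      apply setIntegral_mono_on (integrableOn_const hfin.ne)
        (hθ'abs.mono_set hTsub) hTm
      rintro x ⟨-, hx⟩
      simp only [Set.mem_compl_iff, Set.mem_setOf_eq, not_le] at hx
      exact le_of_lt hx
    have e2 : ∫ s in T, |θ' s| = ∫ s in T, |θ s| := by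
      apply integral_congr_ae
      filter_upwards [ae_restrict_of_ae_restrict_of_subset hTsub hmk] with s hs
      rw [hs]
    have e3 : ∫ s in T, |θ s| ≤ ∫ s in I, |θ s| :=
      setIntegral_mono_set hθ.abs (Filter.Eventually.of_forall fun s => abs_nonneg _)
        (HasSubset.Subset.eventuallyLE hTsub)
    have e4 : ∫ s in T, (Real.pi / 4 : ℝ) = (μ T).toReal * (Real.pi / 4) := by
      rw [setIntegral_const]; simp [smul_eq_mul, Measure.real, hμdef]
    rw [mul_comm]
    rw [e4] at e1
    linarith [e1, e2 ▸ e1, e3, hθb]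
  -- bound on S
  have hSbound : ∫ s in S, |h s| ≤ B * ε ^ ((3:ℝ)/2) := by
    have e1 : ∫ s in S, |h s| ≤ ∫ s in S, |g s| := by
      apply setIntegral_mono_ae_restrict (hhabs.mono_set hSsub) (hgabs.mono_set hSsub)
      filter_upwards [ae_restrict_of_ae_restrict_of_subset hSsub hmk, ae_restrict_mem hSm]
        with s hs hsS
      exact hcomp s hsS.1 (by rw [hs]; exact hsS.2)
    have e2 : ∫ s in S, |g s| ≤ ∫ s in I, |g s| :=
      setIntegral_mono_set hg.abs (Filter.Eventually.of_forall fun s => abs_nonneg _)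
        (HasSubset.Subset.eventuallyLE hSsub)
    linarith
  -- bound on T
  have hTbound : ∫ s in T, |h s| ≤ A * ε * (μ T).toReal := by
    calc ∫ s in T, |h s| ≤ ∫ s in T, (A * ε) := by
          apply setIntegral_mono_on (hhabs.mono_set hTsub)
            (integrableOn_const hfin.ne) hTm
          exact fun x hx => hhb x (hTsub hx)
      _ = (μ T).toReal * (A * ε) := by rw [setIntegral_const]; simp [smul_eq_mul, Measure.real, hμdef]
      _ = A * ε * (μ T).toReal := mul_comm _ _
  -- combine
  have hsplit : ∫ s in I, |h s| = (∫ s in T, |h s|) + ∫ s in S, |h s| := by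
    rw [← hST, setIntegral_union hdisj hTm (hhabs.mono_set hSsub) (hhabs.mono_set hTsub)]
    ring
  have hπ : (0:ℝ) < Real.pi := Real.pi_pos
  have hmT : (0:ℝ) ≤ (μ T).toReal := ENNReal.toReal_nonneg
  have hμTle : (μ T).toReal ≤ 4 * C * Real.sqrt ε / Real.pi := by
    rw [le_div_iff₀ hπ]
    nlinarith [hcheb]
  have hkey : ε * Real.sqrt ε = ε ^ ((3:ℝ)/2) := by
    rw [Real.sqrt_eq_rpow, ← Real.rpow_one_add' (le_of_lt hε) (by norm_num)]
    norm_num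
  have hTfinal : ∫ s in T, |h s| ≤ 4 * A * C / Real.pi * ε ^ ((3:ℝ)/2) := by
    calc ∫ s in T, |h s| ≤ A * ε * (μ T).toReal := hTbound
      _ ≤ A * ε * (4 * C * Real.sqrt ε / Real.pi) := by
          apply mul_le_mul_of_nonneg_left hμTle (by positivity)
      _ = 4 * A * C / Real.pi * (ε * Real.sqrt ε) := by ring
      _ = 4 * A * C / Real.pi * ε ^ ((3:ℝ)/2) := by rw [hkey]
  rw [hsplit]
  linarith
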